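/- Let f₁, …, f_m : X → (-∞, +∞] be proper sublinear lower semicontinuous functions on a real Banach space X. Then ∑ᵢ ∂fᵢ(0) is weak* closed if and only if (∑ᵢ fᵢ)* = f₁* □ ⋯ □ f_m* on X*. -/

import Mathlib

open Pointwise Topology Set

noncomputable section

variable {X : Type*} [NormedAddCommGroup X] [NormedSpace ℝ X]

/-- `f` is proper: never `-∞` and finite somewhere. -/
def EProper (f : X → EReal) : Prop := (∀ x, f x ≠ ⊥) ∧ ∃ x, f x ≠ ⊤

/-- effective domain of `f`. -/
def edom (f : X → EReal) : Set X := {x | f x < ⊤}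

/-- convexity for extended-real-valued functions. -/
def EConvex (f : X → EReal) : Prop :=
  ∀ x y : X, ∀ t : ℝ, 0 ≤ t → t ≤ 1 →
    f (t • x + (1 - t) • y) ≤ (t : EReal) * f x + ((1 - t : ℝ) : EReal) * f y

/-- the ε-subdifferential of `f` at `x`, a subset of the weak* dual. -/
def epsSubdiff (f : X → EReal) (ε : ℝ) (x : X) : Set (WeakDual ℝ X) :=
  {p | f x ≠ ⊤ ∧ f x ≠ ⊥ ∧ ∀ y : X, (p (y - x) : EReal) + f x ≤ f y + (ε : EReal)}

/-- the (exact) subdifferential of `f` at `x`. -/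
def subdiff (f : X → EReal) (x : X) : Set (WeakDual ℝ X) := epsSubdiff f 0 x

/-- the Fenchel conjugate of `f`. -/
def fconj (f : X → EReal) (p : WeakDual ℝ X) : EReal := ⨆ x : X, (p x : EReal) - f x

/-- the infimal convolution of finitely many functions on the dual. -/
def infConv {m : ℕ} (g : Fin m → WeakDual ℝ X → EReal) (p : WeakDual ℝ X) : EReal :=
  ⨅ (y : Fin m → WeakDual ℝ X) (_ : ∑ i, y i = p), ∑ i, g i (y i)

/-- exactness (attainment) of the infimal convolution at `p`. -/
def infConvExactAt {m : ℕ} (g : Fin m → WeakDual ℝ X → EReal) (p : WeakDual ℝ X) : Prop :=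
  ∃ y : Fin m → WeakDual ℝ X, ∑ i, y i = p ∧ infConv g p = ∑ i, g i (y i)

/-- the epigraph of the Fenchel conjugate of `f`, in `X* × ℝ`. -/
def epiConj (f : X → EReal) : Set ((WeakDual ℝ X) × ℝ) :=
  {q | fconj f q.1 ≤ (q.2 : EReal)}


/-- `f` is sublinear. -/
def ESublinear {X : Type*} [NormedAddCommGroup X] [NormedSpace ℝ X] (f : X → EReal) : Prop :=
  f 0 = 0 ∧ (∀ x ∈ edom f, ∀ y ∈ edom f, f (x + y) ≤ f x + f y) ∧
    ∀ t : ℝ, 0 ≤ t → ∀ x ∈ edom f, f (t • x) = (t : EReal) * f x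


section Aux

variable {X : Type*} [NormedAddCommGroup X] [NormedSpace ℝ X]

lemma ereal_coe_sum {ι : Type*} (s : Finset ι) (g : ι → ℝ) :
    ((∑ i ∈ s, g i : ℝ) : EReal) = ∑ i ∈ s, (g i : EReal) := by
  induction s using Finset.cons_induction with
  | empty => simp
  | cons i s hi ih => rw [Finset.sum_cons, Finset.sum_cons, EReal.coe_add, ih]

lemma ereal_sum_ne_bot {ι : Type*} (s : Finset ι) (a : ι → EReal) (h : ∀ i ∈ s, a i ≠ ⊥) :
    ∑ i ∈ s, a i ≠ ⊥ := by
  induction s using Finset.cons_induction with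
  | empty => simp
  | cons i s hi ih =>
    rw [Finset.sum_cons]
    simp only [ne_eq, EReal.add_eq_bot_iff, not_or]
    exact ⟨h i (Finset.mem_cons_self i s), ih fun j hj => h j (Finset.mem_cons_of_mem hj)⟩

lemma ereal_sum_eq_top {ι : Type*} (s : Finset ι) (a : ι → EReal) (h : ∀ i ∈ s, a i ≠ ⊥)
    {j : ι} (hj : j ∈ s) (ha : a j = ⊤) : ∑ i ∈ s, a i = ⊤ := by
  classical
  rw [← Finset.add_sum_erase s a hj, ha, EReal.top_add_iff_ne_bot]
  exact ereal_sum_ne_bot _ _ fun i hi => h i (Finset.mem_of_mem_erase hi)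

lemma mem_subdiff_zero {f : X → EReal} (hf0 : f 0 = 0) (q : WeakDual ℝ X) :
    q ∈ subdiff f 0 ↔ ∀ y, (q y : EReal) ≤ f y := by
  simp only [subdiff, epsSubdiff, Set.mem_setOf_eq, hf0, sub_zero]
  constructor
  · rintro ⟨-, -, h⟩ y
    simpa using h y
  · intro h
    refine ⟨by simp, by simp, fun y => ?_⟩
    simpa using h y

lemma fconj_of_le {g : X → EReal} (hg0 : g 0 = 0) {q : WeakDual ℝ X}
    (hq : ∀ x, (q x : EReal) ≤ g x) : fconj g q = 0 := by
  refine le_antisymm (iSup_le fun x => ?_) ?_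
  · rcases eq_or_ne (g x) ⊤ with h | h
    · rw [h, EReal.sub_top]; exact bot_le
    · have hb : g x ≠ ⊥ := fun hb => absurd (hq x) (by simp [hb])
      have hv : g x = ((g x).toReal : ℝ) := (EReal.coe_toReal h hb).symm
      rw [hv, ← EReal.coe_sub]
      have : q x ≤ (g x).toReal := by exact_mod_cast hv ▸ hq x
      exact_mod_cast sub_nonpos.2 this
  · have h0 : ((q 0 : ℝ) : EReal) - g 0 ≤ fconj g q := le_iSup (fun x => ((q x : ℝ) : EReal) - g x) 0
    simpa [hg0, map_zero] using h0

lemma fconj_of_gt {g : X → EReal}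
    (hpos : ∀ t : ℝ, 0 < t → ∀ x, g x ≠ ⊤ → g x ≠ ⊥ → g (t • x) = (t : EReal) * g x)
    (hbot : ∀ x, g x ≠ ⊥) {q : WeakDual ℝ X} {x : X} (hx : g x < (q x : EReal)) :
    fconj g q = ⊤ := by
  have hxt : g x ≠ ⊤ := (hx.trans (EReal.coe_lt_top _)).ne
  set v := (g x).toReal with hv
  have hgx : g x = (v : EReal) := (EReal.coe_toReal hxt (hbot x)).symm
  have hd : 0 < q x - v := by
    rw [hgx] at hx
    exact sub_pos.2 (EReal.coe_lt_coe_iff.1 hx)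
  rw [(EReal.eq_top_iff_forall_lt _)]
  intro y
  set t : ℝ := (|y| + 1) / (q x - v) with ht
  have htpos : 0 < t := div_pos (by positivity) hd
  have hterm : ((q (t • x) : ℝ) : EReal) - g (t • x) = ((|y| + 1 : ℝ) : EReal) := by
    rw [hpos t htpos x hxt (hbot x), hgx, map_smul, smul_eq_mul, ← EReal.coe_mul, ← EReal.coe_sub,
      ← mul_sub, ht, div_mul_cancel₀ _ hd.ne']
  have hle : ((q (t • x) : ℝ) : EReal) - g (t • x) ≤ fconj g q :=
    le_iSup (fun z => ((q z : ℝ) : EReal) - g z) (t • x)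
  rw [hterm] at hle
  exact lt_of_lt_of_le (by exact_mod_cast (le_abs_self y).trans_lt (lt_add_one _)) hle

/-- the real epigraph of `f`. -/
def eepi (f : X → EReal) : Set (X × ℝ) := {z | f z.1 ≤ (z.2 : EReal)}

lemma eepi_isClosed {f : X → EReal} (hl : LowerSemicontinuous f) : IsClosed (eepi f) := by
  have h1 : IsClosed {p : X × EReal | f p.1 ≤ p.2} := hl.isClosed_epigraph
  have : eepi f = (fun z : X × ℝ => (z.1, (z.2 : EReal))) ⁻¹' {p : X × EReal | f p.1 ≤ p.2} := rfl
  rw [this]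
  exact h1.preimage (continuous_fst.prodMk (continuous_coe_real_ereal.comp continuous_snd))

lemma eepi_convex {f : X → EReal} (hp : EProper f) (hs : ESublinear f) : Convex ℝ (eepi f) := by
  obtain ⟨h0, hadd, hmul⟩ := hs
  rintro ⟨x, sx⟩ hx ⟨y, sy⟩ hy a b ha hb hab
  simp only [eepi, Set.mem_setOf_eq] at hx hy ⊢
  simp only [Prod.smul_mk, Prod.mk_add_mk, smul_eq_mul]
  rcases ha.eq_or_lt with rfl | ha'
  · have hb1 : b = 1 := by linarith
    simpa [hb1] using hy
  rcases hb.eq_or_lt with rfl | hb'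
  · have ha1 : a = 1 := by linarith
    simpa [ha1] using hx
  have hxe : x ∈ edom f := hx.trans_lt (EReal.coe_lt_top sx)
  have hye : y ∈ edom f := hy.trans_lt (EReal.coe_lt_top sy)
  set u := (f x).toReal with hu
  set w := (f y).toReal with hw
  have hfx : f x = (u : EReal) := (EReal.coe_toReal hxe.ne (hp.1 x)).symm
  have hfy : f y = (w : EReal) := (EReal.coe_toReal hye.ne (hp.1 y)).symm
  have h1 : f (a • x) = ((a * u : ℝ) : EReal) := by
    rw [hmul a ha x hxe, hfx, EReal.coe_mul]
  have h2 : f (b • y) = ((b * w : ℝ) : EReal) := by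
    rw [hmul b hb y hye, hfy, EReal.coe_mul]
  have hax : a • x ∈ edom f := by rw [edom, Set.mem_setOf_eq, h1]; exact EReal.coe_lt_top _
  have hby : b • y ∈ edom f := by rw [edom, Set.mem_setOf_eq, h2]; exact EReal.coe_lt_top _
  calc f (a • x + b • y) ≤ f (a • x) + f (b • y) := hadd _ hax _ hby
    _ = ((a * u + b * w : ℝ) : EReal) := by rw [h1, h2, EReal.coe_add]
    _ ≤ ((a * sx + b * sy : ℝ) : EReal) := by
        have hus : u ≤ sx := EReal.coe_le_coe_iff.1 (hfx ▸ hx)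
        have hws : w ≤ sy := EReal.coe_le_coe_iff.1 (hfy ▸ hy)
        exact_mod_cast add_le_add (mul_le_mul_of_nonneg_left hus ha)
          (mul_le_mul_of_nonneg_left hws hb)

lemma sep_core {f : X → EReal} (hp : EProper f) (hl : LowerSemicontinuous f)
    (hs : ESublinear f) {x₀ : X} {r : ℝ} (hr : (r : EReal) < f x₀) :
    ∃ (p : X →L[ℝ] ℝ) (s u : ℝ), p x₀ + s * r < u ∧ u < 0 ∧
      ∀ x, ∀ t : ℝ, f x ≤ (t : EReal) → 0 ≤ p x + s * t := by
  have hcl := eepi_isClosed hl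
  have hcv := eepi_convex hp hs
  have hx0 : (x₀, r) ∉ eepi f := by
    simp only [eepi, Set.mem_setOf_eq, not_le]
    exact hr
  obtain ⟨φ, u, hφ1, hφ2⟩ := geometric_hahn_banach_point_closed hcv hcl hx0
  set p : X →L[ℝ] ℝ := φ.comp (ContinuousLinearMap.inl ℝ X ℝ) with hpdef
  set s : ℝ := φ (0, 1) with hsdef
  have hdec : ∀ z : X × ℝ, φ z = p z.1 + s * z.2 := by
    intro z
    have hz : z = (z.1, (0 : ℝ)) + z.2 • ((0 : X), (1 : ℝ)) := by
      simp [Prod.ext_iff]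
    calc φ z = φ ((z.1, (0 : ℝ)) + z.2 • ((0 : X), (1 : ℝ))) := by rw [← hz]
      _ = φ (z.1, (0 : ℝ)) + z.2 * φ (0, 1) := by rw [map_add, map_smul, smul_eq_mul]
      _ = p z.1 + s * z.2 := by rw [hpdef, hsdef, mul_comm]; rfl
  have h00 : ((0 : X), (0 : ℝ)) ∈ eepi f := by
    simp [eepi, hs.1]
  have hu0 : u < 0 := by
    have h := hφ2 _ h00
    rw [hdec] at h
    simpa using h
  have hcone : ∀ z ∈ eepi f, ∀ c : ℝ, 0 < c → c • z ∈ eepi f := by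
    rintro ⟨x, t⟩ hz c hc
    simp only [eepi, Set.mem_setOf_eq, Prod.smul_mk, smul_eq_mul] at hz ⊢
    have hxe : x ∈ edom f := hz.trans_lt (EReal.coe_lt_top t)
    have hfx : f x = ((f x).toReal : EReal) := (EReal.coe_toReal hxe.ne (hp.1 x)).symm
    rw [hs.2.2 c hc.le x hxe, hfx, ← EReal.coe_mul]
    have : (f x).toReal ≤ t := EReal.coe_le_coe_iff.1 (hfx ▸ hz)
    exact_mod_cast mul_le_mul_of_nonneg_left this hc.le
  have hnng : ∀ z ∈ eepi f, 0 ≤ φ z := by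
    intro z hz
    by_contra h
    push_neg at h
    have hc : 0 < u / φ z := div_pos_of_neg_of_neg hu0 h
    have h2 := hφ2 _ (hcone z hz _ hc)
    rw [map_smul, smul_eq_mul, div_mul_cancel₀ _ h.ne] at h2
    exact lt_irrefl u h2
  refine ⟨p, s, u, ?_, hu0, ?_⟩
  · have := hφ1
    rwa [hdec] at this
  · intro x t hxt
    have := hnng (x, t) hxt
    rwa [hdec] at this

lemma exists_dual_le {f : X → EReal} (hp : EProper f) (hl : LowerSemicontinuous f)
    (hs : ESublinear f) : ∃ q : WeakDual ℝ X, ∀ y, (q y : EReal) ≤ f y := by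
  have hr : ((-1 : ℝ) : EReal) < f 0 := by
    rw [hs.1]
    exact_mod_cast (by norm_num : (-1 : ℝ) < 0)
  obtain ⟨p, s, u, h1, hu0, hpos⟩ := sep_core hp hl hs hr
  have hp0 : p 0 = 0 := map_zero p
  have hs0 : 0 < s := by
    rw [hp0] at h1
    nlinarith
  refine ⟨((-s⁻¹) • p : X →L[ℝ] ℝ), fun y => ?_⟩
  rcases eq_or_ne (f y) ⊤ with h | h
  · rw [h]; exact le_top
  have hfy : f y = ((f y).toReal : EReal) := (EReal.coe_toReal h (hp.1 y)).symm
  have h2 := hpos y (f y).toReal (le_of_eq hfy)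
  rw [hfy]
  change ((((-s⁻¹) * p y : ℝ)) : EReal) ≤ _
  have hinv : 0 < s⁻¹ := inv_pos.2 hs0
  have h3 : 0 ≤ s⁻¹ * (p y + s * (f y).toReal) := mul_nonneg hinv.le h2
  rw [mul_add, ← mul_assoc, inv_mul_cancel₀ hs0.ne', one_mul] at h3
  have : (-s⁻¹) * p y ≤ (f y).toReal := by linarith
  exact_mod_cast this

lemma exists_dual_gt {f : X → EReal} (hp : EProper f) (hl : LowerSemicontinuous f)
    (hs : ESublinear f) {x₀ : X} {r : ℝ} (hr : (r : EReal) < f x₀) :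
    ∃ q : WeakDual ℝ X, (∀ y, (q y : EReal) ≤ f y) ∧ r < q x₀ := by
  obtain ⟨p, s, u, h1, hu0, hpos⟩ := sep_core hp hl hs hr
  have hs0 : 0 ≤ s := by
    have h2 := hpos 0 1 (by rw [hs.1]; exact_mod_cast (by norm_num : (0:ℝ) ≤ 1))
    simpa using h2
  rcases hs0.eq_or_lt with hseq | hslt
  · -- s = 0
    obtain ⟨q₀, hq₀⟩ := exists_dual_le hp hl hs
    have hpx₀ : p x₀ < u := by
      rw [← hseq] at h1
      simpa using h1
    have hpx₀neg : p x₀ < 0 := hpx₀.trans hu0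
    set n : ℝ := max 0 ((r - q₀ x₀ + 1) / (-(p x₀))) with hn
    have hn0 : 0 ≤ n := le_max_left _ _
    let pd : WeakDual ℝ X := p
    refine ⟨q₀ + (-n) • pd, fun y => ?_, ?_⟩
    · rcases eq_or_ne (f y) ⊤ with h | h
      · rw [h]; exact le_top
      have hfy : f y = ((f y).toReal : EReal) := (EReal.coe_toReal h (hp.1 y)).symm
      have hpy : 0 ≤ p y := by
        have h2 := hpos y (f y).toReal (le_of_eq hfy)
        rw [← hseq] at h2
        simpa using h2
      have hq₀y : q₀ y ≤ (f y).toReal := by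
        have := hq₀ y
        rw [hfy] at this
        exact_mod_cast this
      have happ : (q₀ + (-n) • pd) y = q₀ y + (-n) * p y := rfl
      rw [hfy, happ]
      have : q₀ y + (-n) * p y ≤ (f y).toReal := by nlinarith
      exact_mod_cast this
    · have happ : (q₀ + (-n) • pd) x₀ = q₀ x₀ + (-n) * p x₀ := rfl
      rw [happ]
      have hnge : (r - q₀ x₀ + 1) / (-(p x₀)) ≤ n := le_max_right _ _
      have hneg : 0 < -(p x₀) := by linarith
      have : r - q₀ x₀ + 1 ≤ n * (-(p x₀)) := by
        rwa [div_le_iff₀ hneg] at hnge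
      nlinarith
  · -- s > 0
    refine ⟨((-s⁻¹) • p : X →L[ℝ] ℝ), fun y => ?_, ?_⟩
    · rcases eq_or_ne (f y) ⊤ with h | h
      · rw [h]; exact le_top
      have hfy : f y = ((f y).toReal : EReal) := (EReal.coe_toReal h (hp.1 y)).symm
      have h2 := hpos y (f y).toReal (le_of_eq hfy)
      rw [hfy]
      change ((((-s⁻¹) * p y : ℝ)) : EReal) ≤ _
      have hinv : 0 < s⁻¹ := inv_pos.2 hslt
      have h3 : 0 ≤ s⁻¹ * (p y + s * (f y).toReal) := mul_nonneg hinv.le h2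
      rw [mul_add, ← mul_assoc, inv_mul_cancel₀ hslt.ne', one_mul] at h3
      have : (-s⁻¹) * p y ≤ (f y).toReal := by linarith
      exact_mod_cast this
    · change r < (-s⁻¹) * p x₀
      have hinv : 0 < s⁻¹ := inv_pos.2 hslt
      have hru : p x₀ + s * r < 0 := h1.trans hu0
      have h3 : s⁻¹ * (p x₀ + s * r) < 0 := by nlinarith
      have : s⁻¹ * p x₀ + r < 0 := by
        rw [mul_add] at h3
        rw [← mul_assoc, inv_mul_cancel₀ hslt.ne', one_mul] at h3
        linarith
      linarith [this]

instance weakDual_locallyConvex : LocallyConvexSpace ℝ (WeakDual ℝ X) :=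
  WeakBilin.locallyConvexSpace (B := topDualPairing ℝ X)

lemma exists_eval_rep (φ : WeakDual ℝ X →L[ℝ] ℝ) : ∃ x : X, ∀ q : WeakDual ℝ X, φ q = q x := by
  classical
  have hb := LinearMap.hasBasis_weakBilin (topDualPairing ℝ X)
  have hn : φ ⁻¹' Metric.ball 0 1 ∈ 𝓝 (0 : WeakDual ℝ X) := by
    apply φ.continuous.continuousAt.preimage_mem_nhds
    rw [map_zero]
    exact Metric.ball_mem_nhds 0 one_pos
  obtain ⟨U, hU, hUsub⟩ := hb.mem_iff.1 hn
  obtain ⟨sF, ρ, hρ, rfl⟩ := (SeminormFamily.basisSets_iff _).1 hU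
  have key : ∀ q : WeakDual ℝ X, (∀ x ∈ sF, q x = 0) → φ q = 0 := by
    intro q hq
    by_contra h
    have hc : ∀ c : ℝ, |c| * |φ q| < 1 := by
      intro c
      have hmem : c • q ∈ (sF.sup (topDualPairing ℝ X).toSeminormFamily).ball 0 ρ := by
        refine (Seminorm.mem_ball_zero _).2 ?_
        refine lt_of_le_of_lt (Seminorm.finset_sup_apply_le le_rfl fun i hi => ?_) hρ
        show ‖c * q i‖ ≤ 0
        rw [hq i hi, mul_zero, norm_zero]
      have := hUsub hmem
      change φ (c • q) ∈ Metric.ball (0 : ℝ) 1 at this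
      simpa only [id_eq, Set.mem_preimage, Metric.mem_ball, dist_zero_right, Real.norm_eq_abs,
        map_smul, smul_eq_mul, abs_mul] using this
    have hq0 : 0 < |φ q| := abs_pos.2 h
    have h2 := hc (2 / |φ q|)
    rw [abs_of_nonneg (by positivity), div_mul_cancel₀ _ hq0.ne'] at h2
    norm_num at h2
  set L : sF → WeakDual ℝ X →ₗ[ℝ] ℝ := fun x => (topDualPairing ℝ X).flip (x : X) with hL
  have hker : ⨅ i : sF, LinearMap.ker (L i) ≤ LinearMap.ker (φ : WeakDual ℝ X →ₗ[ℝ] ℝ) := by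
    intro q hq
    rw [Submodule.mem_iInf] at hq
    rw [LinearMap.mem_ker]
    apply key
    intro x hx
    exact hq ⟨x, hx⟩
  have hspan := mem_span_of_iInf_ker_le_ker hker
  rw [Submodule.mem_span_range_iff_exists_fun ℝ] at hspan
  obtain ⟨c, hc⟩ := hspan
  refine ⟨∑ i : sF, c i • (i : X), fun q => ?_⟩
  have happ := congrFun (congrArg (fun ψ : WeakDual ℝ X →ₗ[ℝ] ℝ => (ψ : WeakDual ℝ X → ℝ)) hc) q
  simp only [LinearMap.coe_sum, Finset.sum_apply, LinearMap.smul_apply, smul_eq_mul] at happ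
  rw [show ((φ : WeakDual ℝ X →ₗ[ℝ] ℝ) : WeakDual ℝ X → ℝ) q = φ q from rfl] at happ
  rw [← happ, map_sum]
  refine Finset.sum_congr rfl fun i _ => ?_
  rw [map_smul, smul_eq_mul]
  rfl

lemma fconj_nonneg {g : X → EReal} (hg0 : g 0 = 0) (q : WeakDual ℝ X) : 0 ≤ fconj g q := by
  have h0 : ((q 0 : ℝ) : EReal) - g 0 ≤ fconj g q := le_iSup (fun x => ((q x : ℝ) : EReal) - g x) 0
  simpa [hg0, map_zero] using h0

lemma weakdual_sum_apply {ι : Type*} (s : Finset ι) (y : ι → WeakDual ℝ X) (x : X) :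
    (∑ i ∈ s, y i) x = ∑ i ∈ s, y i x := by
  induction s using Finset.cons_induction with
  | empty => rfl
  | cons i s hi ih =>
    rw [Finset.sum_cons, Finset.sum_cons, ← ih]
    rfl

lemma subdiff_zero_convex {f : X → EReal} (hp : EProper f) (hf0 : f 0 = 0) :
    Convex ℝ (subdiff f 0) := by
  intro q₁ h₁ q₂ h₂ a b ha hb hab
  rw [mem_subdiff_zero hf0] at h₁ h₂ ⊢
  intro y
  rcases eq_or_ne (f y) ⊤ with h | h
  · rw [h]; exact le_top
  have hfy : f y = ((f y).toReal : EReal) := (EReal.coe_toReal h (hp.1 y)).symm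
  have h1y : q₁ y ≤ (f y).toReal := by exact_mod_cast hfy ▸ h₁ y
  have h2y : q₂ y ≤ (f y).toReal := by exact_mod_cast hfy ▸ h₂ y
  have happ : (a • q₁ + b • q₂) y = a * q₁ y + b * q₂ y := rfl
  rw [happ, hfy]
  have : a * q₁ y + b * q₂ y ≤ (f y).toReal := by
    calc a * q₁ y + b * q₂ y ≤ a * (f y).toReal + b * (f y).toReal :=
          add_le_add (mul_le_mul_of_nonneg_left h1y ha) (mul_le_mul_of_nonneg_left h2y hb)
      _ = (a + b) * (f y).toReal := by ring
      _ = (f y).toReal := by rw [hab, one_mul]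
  exact_mod_cast this

lemma ereal_exists_real_lt_sum {m : ℕ} (a : Fin m → EReal) (hbot : ∀ i, a i ≠ ⊥) {u : ℝ}
    (h : (u : EReal) < ∑ i, a i) :
    ∃ r : Fin m → ℝ, (∀ i, (r i : EReal) < a i) ∧ u < ∑ i, r i := by
  classical
  by_cases hall : ∀ i, a i ≠ ⊤
  · set v : Fin m → ℝ := fun i => (a i).toReal with hv
    have hva : ∀ i, a i = (v i : EReal) := fun i => (EReal.coe_toReal (hall i) (hbot i)).symm
    have hsum : ∑ i, a i = ((∑ i, v i : ℝ) : EReal) := by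
      rw [ereal_coe_sum]
      exact Finset.sum_congr rfl fun i _ => hva i
    rw [hsum] at h
    have hu : u < ∑ i, v i := EReal.coe_lt_coe_iff.1 h
    set ε : ℝ := (∑ i, v i - u) / (m + 1) with hε
    have hεpos : 0 < ε := div_pos (by linarith) (by positivity)
    refine ⟨fun i => v i - ε, fun i => ?_, ?_⟩
    · rw [hva i]
      exact_mod_cast sub_lt_self _ hεpos
    · rw [Finset.sum_sub_distrib, Finset.sum_const, Finset.card_univ, Fintype.card_fin,
        nsmul_eq_mul]
      have hmε : (m : ℝ) * ε < (m + 1) * ε := by nlinarith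
      have : ((m : ℝ) + 1) * ε = ∑ i, v i - u := by
        rw [hε]; field_simp
      linarith
  · push_neg at hall
    obtain ⟨j, hj⟩ := hall
    have hw : ∀ i, ∃ w : ℝ, (w : EReal) < a i := by
      intro i
      obtain ⟨w, -, hw2⟩ := EReal.exists_between_coe_real (Ne.bot_lt (hbot i))
      exact ⟨w, hw2⟩
    choose w hwlt using hw
    set r : Fin m → ℝ :=
      Function.update w j (u + 1 - ∑ i ∈ Finset.univ.erase j, w i) with hrdef
    have hrsum : ∑ i, r i = u + 1 := by
      rw [← Finset.add_sum_erase _ r (Finset.mem_univ j)]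
      have h1 : r j = u + 1 - ∑ i ∈ Finset.univ.erase j, w i := Function.update_self _ _ _
      have h2 : ∑ i ∈ Finset.univ.erase j, r i = ∑ i ∈ Finset.univ.erase j, w i :=
        Finset.sum_congr rfl fun i hi =>
          Function.update_of_ne (Finset.mem_erase.1 hi).1 _ _
      rw [h1, h2]; ring
    refine ⟨r, fun i => ?_, by rw [hrsum]; linarith⟩
    rcases eq_or_ne i j with rfl | hij
    · rw [hj]; exact EReal.coe_lt_top _
    · rw [hrdef, Function.update_of_ne hij]
      exact hwlt i

end Aux

theorem stmt11 {X : Type*} [NormedAddCommGroup X] [NormedSpace ℝ X] [CompleteSpace X]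
    {m : ℕ} (hm : 1 ≤ m) (f : Fin m → X → EReal)
    (hp : ∀ i, EProper (f i)) (hl : ∀ i, LowerSemicontinuous (f i))
    (hs : ∀ i, ESublinear (f i)) :
    IsClosed (∑ i, subdiff (f i) 0) ↔
      ∀ p : WeakDual ℝ X, fconj (fun x => ∑ i, f i x) p = infConv (fun i => fconj (f i)) p := by
  classical
  have hne : (Finset.univ : Finset (Fin m)).Nonempty := ⟨⟨0, hm⟩, Finset.mem_univ _⟩
  have hf0 : ∀ i, f i 0 = 0 := fun i => (hs i).1
  set g : X → EReal := fun x => ∑ i, f i x with hg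
  have hg0 : g 0 = 0 := by simp [hg, hf0]
  have hgbot : ∀ x, g x ≠ ⊥ := fun x => ereal_sum_ne_bot _ _ fun i _ => (hp i).1 x
  have hfitop : ∀ x, g x ≠ ⊤ → ∀ i, f i x ≠ ⊤ := fun x hx i hi =>
    hx (ereal_sum_eq_top _ _ (fun i _ => (hp i).1 x) (Finset.mem_univ i) hi)
  have hipos : ∀ i, ∀ t : ℝ, 0 < t → ∀ x, f i x ≠ ⊤ → f i x ≠ ⊥ →
      f i (t • x) = (t : EReal) * f i x := by
    intro i t ht x hxt _
    exact (hs i).2.2 t ht.le x (Ne.lt_top hxt)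
  have hgpos : ∀ t : ℝ, 0 < t → ∀ x, g x ≠ ⊤ → g x ≠ ⊥ → g (t • x) = (t : EReal) * g x := by
    intro t ht x hxt _
    have hv : ∀ i, f i x = (((f i x).toReal : ℝ) : EReal) := fun i =>
      (EReal.coe_toReal (hfitop x hxt i) ((hp i).1 x)).symm
    have h1 : g (t • x) = ((∑ i, t * (f i x).toReal : ℝ) : EReal) := by
      show ∑ i, f i (t • x) = _
      rw [ereal_coe_sum]
      refine Finset.sum_congr rfl fun i _ => ?_
      rw [hipos i t ht x (hfitop x hxt i) ((hp i).1 x)]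
      conv_lhs => rw [hv i]
      rw [← EReal.coe_mul]
    have h2 : g x = ((∑ i, (f i x).toReal : ℝ) : EReal) := by
      show ∑ i, f i x = _
      rw [ereal_coe_sum]
      exact Finset.sum_congr rfl fun i _ => hv i
    rw [h1, h2, ← EReal.coe_mul, Finset.mul_sum]
  set K : Set (WeakDual ℝ X) := {q | ∀ x, (q x : EReal) ≤ g x} with hK
  set S : Set (WeakDual ℝ X) := ∑ i, subdiff (f i) 0 with hSdef
  have hKi : ∀ i (q : WeakDual ℝ X), q ∈ subdiff (f i) 0 ↔ ∀ y, (q y : EReal) ≤ f i y :=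
    fun i q => mem_subdiff_zero (hf0 i) q
  have hmemS : ∀ q : WeakDual ℝ X, q ∈ S ↔
      ∃ y : Fin m → WeakDual ℝ X, (∀ i, ∀ z, ((y i) z : EReal) ≤ f i z) ∧ ∑ i, y i = q := by
    intro q
    rw [hSdef, Set.mem_fintype_sum]
    constructor
    · rintro ⟨y, hy, rfl⟩
      exact ⟨y, fun i => (hKi i (y i)).1 (hy i), rfl⟩
    · rintro ⟨y, hy, rfl⟩
      exact ⟨y, fun i => (hKi i (y i)).2 (hy i), rfl⟩
  have hSK : S ⊆ K := by
    intro q hq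
    obtain ⟨y, hy, rfl⟩ := (hmemS q).1 hq
    intro x
    rw [weakdual_sum_apply, ereal_coe_sum]
    exact Finset.sum_le_sum fun i _ => hy i x
  have hconj0 : ∀ q ∈ K, fconj g q = 0 := fun q hq => fconj_of_le hg0 hq
  have hconjT : ∀ q ∉ K, fconj g q = ⊤ := by
    intro q hq
    rw [hK] at hq
    simp only [Set.mem_setOf_eq, not_forall, not_le] at hq
    obtain ⟨x, hx⟩ := hq
    exact fconj_of_gt hgpos hgbot hx
  have hfc0 : ∀ i (z : WeakDual ℝ X), (∀ y, (z y : EReal) ≤ f i y) → fconj (f i) z = 0 :=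
    fun i z hz => fconj_of_le (hf0 i) hz
  have hfcnn : ∀ i (z : WeakDual ℝ X), 0 ≤ fconj (f i) z := fun i z => fconj_nonneg (hf0 i) z
  have hicS : ∀ q ∈ S, infConv (fun i => fconj (f i)) q = 0 := by
    intro q hq
    obtain ⟨y, hy, hysum⟩ := (hmemS q).1 hq
    refine le_antisymm ?_ ?_
    · calc infConv (fun i => fconj (f i)) q ≤ ∑ i, fconj (f i) (y i) := iInf₂_le y hysum
        _ = 0 := Finset.sum_eq_zero fun i _ => hfc0 i (y i) (hy i)
    · exact le_iInf fun y' => le_iInf fun _ => Finset.sum_nonneg fun i _ => hfcnn i (y' i)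
  have hicT : ∀ q ∉ S, infConv (fun i => fconj (f i)) q = ⊤ := by
    intro q hq
    rw [infConv, iInf_eq_top]
    intro y
    rw [iInf_eq_top]
    intro hy
    have hnall : ¬ ∀ i, ∀ z, ((y i) z : EReal) ≤ f i z := fun hall =>
      hq ((hmemS q).2 ⟨y, hall, hy⟩)
    push_neg at hnall
    obtain ⟨j, z, hz⟩ := hnall
    refine ereal_sum_eq_top _ _ (fun i _ => ?_) (Finset.mem_univ j) ?_
    · exact ne_bot_of_gt (lt_of_lt_of_le EReal.bot_lt_zero (hfcnn i (y i)))
    · exact fconj_of_gt (hipos j) ((hp j).1) hz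
  have hKcl : IsClosed K := by
    have hKeq : K = ⋂ x, {q : WeakDual ℝ X | (q x : EReal) ≤ g x} := by
      ext q
      simp [hK, Set.mem_iInter]
    rw [hKeq]
    exact isClosed_iInter fun x =>
      isClosed_le (continuous_coe_real_ereal.comp (WeakDual.eval_continuous x)) continuous_const
  constructor
  · intro hcl
    have hKS : K = S := by
      refine Set.Subset.antisymm ?_ hSK
      intro q hq
      by_contra hqs
      have hconv : Convex ℝ S := by
        rw [hSdef]
        refine Finset.sum_induction _ (Convex ℝ) (fun a b ha hb => ha.add hb) ?_
          (fun i _ => subdiff_zero_convex (hp i) (hf0 i))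
        exact convex_singleton (𝕜 := ℝ) (0 : WeakDual ℝ X)
      obtain ⟨φ, u, hφS, hφp⟩ := geometric_hahn_banach_closed_point hconv hcl hqs
      obtain ⟨x₀, hx₀⟩ := exists_eval_rep φ
      have hupx : u < q x₀ := hx₀ q ▸ hφp
      have hx1 : (u : EReal) < g x₀ := lt_of_lt_of_le (by exact_mod_cast hupx) (hq x₀)
      obtain ⟨r, hrlt, hru⟩ :=
        ereal_exists_real_lt_sum (fun i => f i x₀) (fun i => (hp i).1 x₀) hx1
      choose qi hqi1 hqi2 using fun i => exists_dual_gt (hp i) (hl i) (hs i) (hrlt i)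
      have hmem : (∑ i, qi i) ∈ S := (hmemS _).2 ⟨qi, hqi1, rfl⟩
      have hlt := hφS _ hmem
      rw [hx₀, weakdual_sum_apply] at hlt
      have hsum : ∑ i, r i < ∑ i, (qi i) x₀ :=
        Finset.sum_lt_sum_of_nonempty hne fun i _ => hqi2 i
      linarith
    intro p
    rcases em (p ∈ K) with hpK | hpK
    · rw [hconj0 p hpK, hicS p (hKS ▸ hpK)]
    · rw [hconjT p hpK, hicT p fun hpS => hpK (hKS.symm ▸ hpS)]
  · intro heq
    have hKS : K = S := by
      ext q
      constructor
      · intro hqK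
        by_contra hqS
        have h1 := heq q
        rw [hconj0 q hqK, hicT q hqS] at h1
        exact EReal.zero_ne_top h1
      · exact fun h => hSK h
    rw [← hKS]
    exact hKcl
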